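/- arXiv:1712.04047 — 3 statements merged into one kernel-verified Lean document; each statement's English description precedes it below -/
import Mathlib

section
/- Let f(x) = Hx + c be a linear Hamiltonian vector field with Hamiltonian energy E(x) = ½x^T S x + c̃^T x (H = J^{-1}S, c = J^{-1}c̃, S symmetric). Let U ∈ ℝ^{2n×2k} be symplectic and F = U†HU with U† = J_k^{-1}U^T J_n. Then the projected exponential Euler step x₊ = x + h U φ(hF) U† f(x) satisfies E(x₊) = E(x). -/
open Matrix

noncomputable def Jmat (n : ℕ) : Matrix (Fin n ⊕ Fin n) (Fin n ⊕ Fin n) ℝ :=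
  Matrix.fromBlocks 0 1 (-1) 0

attribute [local instance] Matrix.linftyOpNormedRing Matrix.linftyOpNormedAlgebra

noncomputable def expM {m : Type*} [Fintype m] [DecidableEq m] (A : Matrix m m ℝ) : Matrix m m ℝ :=
  NormedSpace.exp A

/-- `phiM A = ∫₀¹ e^{sA} ds`, the matrix version of `φ(z) = (e^z-1)/z`. -/
noncomputable def phiM {m : Type*} [Fintype m] [DecidableEq m] (A : Matrix m m ℝ) : Matrix m m ℝ :=
  ∫ s in (0:ℝ)..1, NormedSpace.exp (s • A)

/-! ### Auxiliary lemmas about `Jmat` -/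

lemma Jmat_mul_Jmat (n : ℕ) : Jmat n * Jmat n = -1 := by
  simp [Jmat, Matrix.fromBlocks_multiply, ← Matrix.fromBlocks_one,
    Matrix.fromBlocks_neg, neg_zero]

lemma Jmat_transpose (n : ℕ) : (Jmat n)ᵀ = -(Jmat n) := by
  simp [Jmat, Matrix.fromBlocks_transpose, Matrix.fromBlocks_neg, neg_zero]

lemma Jmat_mul_neg_Jmat (n : ℕ) : Jmat n * (-(Jmat n)) = 1 := by
  rw [Matrix.mul_neg, Jmat_mul_Jmat, neg_neg]

lemma neg_Jmat_mul_Jmat (n : ℕ) : (-(Jmat n)) * Jmat n = 1 := by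
  rw [Matrix.neg_mul, Jmat_mul_Jmat, neg_neg]

lemma Jmat_inv (n : ℕ) : (Jmat n)⁻¹ = -(Jmat n) :=
  Matrix.inv_eq_right_inv (Jmat_mul_neg_Jmat n)

/-! ### Auxiliary lemmas about `phiM` -/

section phiMLemmas
variable {m : Type*} [Fintype m] [DecidableEq m]

lemma expc (A : Matrix m m ℝ) : Continuous fun s : ℝ => NormedSpace.exp (s • A) :=
  NormedSpace.exp_continuous.comp (continuous_id.smul continuous_const)

lemma expInt (A : Matrix m m ℝ) (a b : ℝ) :
    @IntervalIntegrable _ PseudoMetricSpace.toUniformSpace.toTopologicalSpace _ (fun s : ℝ => NormedSpace.exp (s • A)) MeasureTheory.volume a b :=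
  (expc A).intervalIntegrable a b

lemma mul_phiM (B A : Matrix m m ℝ) : B * phiM A = ∫ s in (0:ℝ)..1, B * NormedSpace.exp (s • A) :=
  ((LinearMap.toContinuousLinearMap (LinearMap.mulLeft ℝ B)).intervalIntegral_comp_comm
    (expInt A 0 1)).symm

lemma phiM_transpose (A : Matrix m m ℝ) : (phiM A)ᵀ = phiM Aᵀ := by
  have h1 : (phiM A)ᵀ = ∫ s in (0:ℝ)..1, (NormedSpace.exp (s • A))ᵀ :=
    ((LinearMap.toContinuousLinearMap
      (Matrix.transposeLinearEquiv m m ℝ ℝ).toLinearMap).intervalIntegral_comp_comm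
        (expInt A 0 1)).symm
  rw [h1, phiM]
  congr 1; ext s : 1
  rw [← Matrix.exp_transpose, Matrix.transpose_smul]

lemma mul_phiM_self (A : Matrix m m ℝ) :
    A * phiM A = NormedSpace.exp A - 1 := by
  rw [mul_phiM]
  have key : (∫ s in (0:ℝ)..1, A * NormedSpace.exp (s • A))
      = NormedSpace.exp ((1:ℝ) • A) - NormedSpace.exp ((0:ℝ) • A) := by
    refine intervalIntegral.integral_eq_sub_of_hasDerivAt
      (f := fun u : ℝ => NormedSpace.exp (u • A)) (fun t _ => ?_) ?_
    · exact hasDerivAt_exp_smul_const' (𝕂 := ℝ) A t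
    · exact ((continuous_const.mul (expc A)).intervalIntegrable 0 1)
  rw [key, one_smul, zero_smul, NormedSpace.exp_zero]

lemma phiM_units_conj (B : (Matrix m m ℝ)ˣ) (A : Matrix m m ℝ) :
    phiM ((B : Matrix m m ℝ) * A * (↑B⁻¹ : Matrix m m ℝ))
      = (B : Matrix m m ℝ) * phiM A * (↑B⁻¹ : Matrix m m ℝ) := by
  have h1 : ∀ s : ℝ, NormedSpace.exp (s • ((B : Matrix m m ℝ) * A * (↑B⁻¹ : Matrix m m ℝ)))
      = (B : Matrix m m ℝ) * NormedSpace.exp (s • A) * (↑B⁻¹ : Matrix m m ℝ) := by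
    intro s
    have : s • ((B : Matrix m m ℝ) * A * (↑B⁻¹ : Matrix m m ℝ))
        = (B : Matrix m m ℝ) * (s • A) * (↑B⁻¹ : Matrix m m ℝ) := by
      rw [Matrix.mul_smul, Matrix.smul_mul]
    rw [this, Matrix.exp_units_conj]
  rw [phiM]
  simp_rw [h1]
  exact ((LinearMap.toContinuousLinearMap
      ((LinearMap.mulRight ℝ ((↑B⁻¹ : Matrix m m ℝ))).comp
        (LinearMap.mulLeft ℝ ((B : Matrix m m ℝ))))).intervalIntegral_comp_comm
          (expInt A 0 1)).trans rfl

lemma phiM_neg_mul_exp (A : Matrix m m ℝ) :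
    phiM (-A) * NormedSpace.exp A = phiM A := by
  have hmm : phiM (-A) * NormedSpace.exp A
      = ∫ s in (0:ℝ)..1, NormedSpace.exp (s • (-A)) * NormedSpace.exp A :=
    ((LinearMap.toContinuousLinearMap
      (LinearMap.mulRight ℝ (NormedSpace.exp A))).intervalIntegral_comp_comm
        (expInt (-A) 0 1)).symm
  rw [hmm, phiM]
  have h2 : ∀ s : ℝ, NormedSpace.exp (s • (-A)) * NormedSpace.exp A
      = NormedSpace.exp ((1 - s) • A) := by
    intro s
    rw [smul_neg, ← Matrix.exp_add_of_commute _ _ (((Commute.refl A).smul_left s).neg_left)]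
    congr 1
    module
  simp_rw [h2]
  rw [intervalIntegral.integral_comp_sub_left (fun u => NormedSpace.exp (u • A)) 1]
  norm_num

/-- The key matrix identity: for `K` with `K*K = -1`, `Kᵀ = -K` and `K*A` symmetric,
`φ(A)ᵀ (K A) φ(A) = K φ(A) - φ(A)ᵀ K`. -/
lemma phiM_key (A K : Matrix m m ℝ) (hK : K * K = -1) (hKT : Kᵀ = -K)
    (hsym : (K * A)ᵀ = K * A) :
    (phiM A)ᵀ * (K * A) * phiM A = K * phiM A - (phiM A)ᵀ * K := by
  have hK1 : K * (-K) = 1 := by rw [Matrix.mul_neg, hK, neg_neg]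
  have hK2 : (-K) * K = 1 := by rw [Matrix.neg_mul, hK, neg_neg]
  set Ku : (Matrix m m ℝ)ˣ := ⟨K, -K, hK1, hK2⟩ with hKu
  have hKuinv : (↑Ku⁻¹ : Matrix m m ℝ) = -K := rfl
  have hAT : Aᵀ = K * (-A) * (-K) := by
    have h1 : Aᵀ * K = -(K * A) := by
      have h0 : K * A = -(Aᵀ * K) := by
        rw [← hsym, Matrix.transpose_mul, hKT, Matrix.mul_neg]
      rw [h0, neg_neg]
    calc Aᵀ = Aᵀ * (K * (-K)) := by rw [hK1, Matrix.mul_one]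
    _ = (Aᵀ * K) * (-K) := by noncomm_ring
    _ = -(K * A) * (-K) := by rw [h1]
    _ = K * (-A) * (-K) := by noncomm_ring
  have hD1 : (phiM A)ᵀ * K = K * phiM (-A) := by
    rw [phiM_transpose, hAT,
      show K * -A * -K = (Ku : Matrix m m ℝ) * (-A) * (↑Ku⁻¹ : Matrix m m ℝ) from rfl,
      phiM_units_conj, hKuinv]
    calc ↑Ku * phiM (-A) * -K * K = ↑Ku * phiM (-A) * (-K * K) := by noncomm_ring
    _ = K * phiM (-A) := by rw [hK2, Matrix.mul_one]
  calc (phiM A)ᵀ * (K * A) * phiM A = (phiM A)ᵀ * K * (A * phiM A) := by noncomm_ring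
  _ = K * phiM (-A) * (NormedSpace.exp A - 1) := by rw [hD1, mul_phiM_self]
  _ = K * (phiM (-A) * NormedSpace.exp A) - K * phiM (-A) := by noncomm_ring
  _ = K * phiM A - (phiM A)ᵀ * K := by rw [phiM_neg_mul_exp, hD1]

end phiMLemmas

/-! ### Dot product helpers -/

section dotHelpers
variable {p q : Type*} [Fintype p] [Fintype q]

lemma dp_shift (M : Matrix p q ℝ) (u : p → ℝ) (w : q → ℝ) :
    u ⬝ᵥ M.mulVec w = Mᵀ.mulVec u ⬝ᵥ w := by
  rw [Matrix.dotProduct_mulVec, ← Matrix.mulVec_transpose]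

lemma dp_symm (S : Matrix p p ℝ) (hS : Sᵀ = S) (u w : p → ℝ) :
    u ⬝ᵥ S.mulVec w = w ⬝ᵥ S.mulVec u := by
  rw [dp_shift, hS, dotProduct_comm]

lemma dp_shift' (M : Matrix p q ℝ) (u : q → ℝ) (z : p → ℝ) :
    M.mulVec u ⬝ᵥ z = u ⬝ᵥ Mᵀ.mulVec z := by
  rw [dotProduct_comm, dp_shift, dotProduct_comm]

lemma dp_quad (M : Matrix p q ℝ) (B : Matrix p p ℝ) (u : q → ℝ) :
    M.mulVec u ⬝ᵥ B.mulVec (M.mulVec u) = u ⬝ᵥ (Mᵀ * B * M).mulVec u := by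
  rw [dp_shift', Matrix.mulVec_mulVec, Matrix.mulVec_mulVec]

end dotHelpers

theorem stmt11 (n k : ℕ) (S : Matrix (Fin n ⊕ Fin n) (Fin n ⊕ Fin n) ℝ) (hS : Sᵀ = S)
    (ctilde : (Fin n ⊕ Fin n) → ℝ)
    (H : Matrix (Fin n ⊕ Fin n) (Fin n ⊕ Fin n) ℝ) (hH : H = (Jmat n)⁻¹ * S)
    (c : (Fin n ⊕ Fin n) → ℝ) (hc : c = (Jmat n)⁻¹.mulVec ctilde)
    (E : ((Fin n ⊕ Fin n) → ℝ) → ℝ)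
    (hE : ∀ x, E x = (1/2) * (x ⬝ᵥ S.mulVec x) + ctilde ⬝ᵥ x)
    (f : ((Fin n ⊕ Fin n) → ℝ) → ((Fin n ⊕ Fin n) → ℝ))
    (hf : ∀ x, f x = H.mulVec x + c)
    (U : Matrix (Fin n ⊕ Fin n) (Fin k ⊕ Fin k) ℝ) (hU : Uᵀ * Jmat n * U = Jmat k)
    (Udag : Matrix (Fin k ⊕ Fin k) (Fin n ⊕ Fin n) ℝ) (hUdag : Udag = (Jmat k)⁻¹ * Uᵀ * Jmat n)
    (F : Matrix (Fin k ⊕ Fin k) (Fin k ⊕ Fin k) ℝ) (hF : F = Udag * H * U)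
    (h : ℝ) (x xp : (Fin n ⊕ Fin n) → ℝ)
    (hxp : xp = x + h • U.mulVec ((phiM (h • F)).mulVec (Udag.mulVec (f x)))) :
    E xp = E x := by
  -- abbreviations
  set A : Matrix (Fin k ⊕ Fin k) (Fin k ⊕ Fin k) ℝ := h • F with hA
  set P : Matrix (Fin k ⊕ Fin k) (Fin k ⊕ Fin k) ℝ := h • phiM A with hP
  set g : (Fin k ⊕ Fin k) → ℝ := Udag.mulVec (f x) with hg
  set ξ : (Fin k ⊕ Fin k) → ℝ := P.mulVec g with hξ
  set v : (Fin n ⊕ Fin n) → ℝ := U.mulVec ξ with hv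
  have hxpv : xp = x + v := by
    rw [hxp, hv, hξ, hP, Matrix.smul_mulVec, Matrix.mulVec_smul]
  -- basic matrix facts
  have e1 : Jmat n * H = S := by
    rw [hH, Jmat_inv, ← Matrix.mul_assoc, Jmat_mul_neg_Jmat, Matrix.one_mul]
  have e2 : (Jmat n).mulVec c = ctilde := by
    rw [hc, Jmat_inv, Matrix.mulVec_mulVec, Jmat_mul_neg_Jmat, Matrix.one_mulVec]
  have hKF : Jmat k * F = Uᵀ * S * U := by
    rw [hF, hUdag, Jmat_inv]
    have r1 : -(Jmat k) * Uᵀ * Jmat n * H * U = -(Jmat k) * (Uᵀ * S * U) := by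
      rw [Matrix.mul_assoc (-(Jmat k) * Uᵀ) (Jmat n) H, e1]
      simp [Matrix.mul_assoc]
    rw [r1, ← Matrix.mul_assoc, Jmat_mul_neg_Jmat, Matrix.one_mul]
  have hsymKF : (Jmat k * F)ᵀ = Jmat k * F := by
    rw [hKF, Matrix.transpose_mul, Matrix.transpose_mul, Matrix.transpose_transpose, hS,
      Matrix.mul_assoc]
  have hKA_sym : (Jmat k * A)ᵀ = Jmat k * A := by
    rw [hA, mul_smul_comm, Matrix.transpose_smul, hsymKF]
  -- the key quadratic identity for P
  have key := phiM_key A (Jmat k) (Jmat_mul_Jmat k) (Jmat_transpose k) hKA_sym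
  have hPkey : Pᵀ * (Jmat k * F) * P = Jmat k * P - Pᵀ * Jmat k := by
    have hKA : Jmat k * A = h • (Jmat k * F) := by rw [hA, mul_smul_comm]
    calc Pᵀ * (Jmat k * F) * P
        = h • ((phiM A)ᵀ * (Jmat k * F) * (h • phiM A)) := by
          rw [hP, Matrix.transpose_smul, Matrix.smul_mul, Matrix.smul_mul]
    _ = h • ((phiM A)ᵀ * (h • (Jmat k * F)) * phiM A) := by
          rw [Matrix.mul_smul, Matrix.mul_smul, Matrix.smul_mul]
    _ = h • ((phiM A)ᵀ * (Jmat k * A) * phiM A) := by rw [hKA]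
    _ = h • (Jmat k * phiM A - (phiM A)ᵀ * Jmat k) := by rw [key]
    _ = Jmat k * P - Pᵀ * Jmat k := by
          rw [smul_sub, hP, Matrix.transpose_smul, Matrix.mul_smul, Matrix.smul_mul]
  -- computation of g
  have hgw : g = ((Jmat k)⁻¹ * Uᵀ).mulVec (S.mulVec x + ctilde) := by
    rw [hg, hf, hUdag]
    rw [← Matrix.mulVec_mulVec]
    congr 1
    rw [Matrix.mulVec_add, Matrix.mulVec_mulVec, e1, e2]
  have hKg : (Jmat k).mulVec g = Uᵀ.mulVec (S.mulVec x + ctilde) := by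
    rw [hgw, Matrix.mulVec_mulVec, Jmat_inv, ← Matrix.mul_assoc, Jmat_mul_neg_Jmat,
      Matrix.one_mul]
  -- quadratic form computations
  have hq1 : v ⬝ᵥ S.mulVec v = g ⬝ᵥ (Jmat k * P).mulVec g - g ⬝ᵥ (Pᵀ * Jmat k).mulVec g := by
    calc v ⬝ᵥ S.mulVec v = ξ ⬝ᵥ (Uᵀ * S * U).mulVec ξ := by rw [hv, dp_quad]
    _ = ξ ⬝ᵥ (Jmat k * F).mulVec ξ := by rw [hKF]
    _ = g ⬝ᵥ (Pᵀ * (Jmat k * F) * P).mulVec g := by rw [hξ, dp_quad]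
    _ = g ⬝ᵥ ((Jmat k * P) - (Pᵀ * Jmat k)).mulVec g := by rw [hPkey]
    _ = g ⬝ᵥ (Jmat k * P).mulVec g - g ⬝ᵥ (Pᵀ * Jmat k).mulVec g := by
          rw [Matrix.sub_mulVec, dotProduct_sub]
  have hq2 : (Jmat k).mulVec g ⬝ᵥ ξ = - (g ⬝ᵥ (Jmat k * P).mulVec g) := by
    rw [hξ, dp_shift', Matrix.mulVec_mulVec, Jmat_transpose, Matrix.neg_mul,
      Matrix.neg_mulVec, dotProduct_neg]
  have hq3 : g ⬝ᵥ (Pᵀ * Jmat k).mulVec g = (Jmat k).mulVec g ⬝ᵥ ξ := by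
    rw [← Matrix.mulVec_mulVec, dp_shift, Matrix.transpose_transpose,
      dotProduct_comm, hξ]
  -- symmetric cross term
  have hsym' : v ⬝ᵥ S.mulVec x = x ⬝ᵥ S.mulVec v := dp_symm S hS v x
  -- the linear term
  have hlin : S.mulVec x ⬝ᵥ v + ctilde ⬝ᵥ v = (Jmat k).mulVec g ⬝ᵥ ξ := by
    rw [← add_dotProduct, hv, dp_shift, hKg]
  -- final arithmetic
  rw [hE, hE, hxpv]
  simp only [Matrix.mulVec_add, dotProduct_add, add_dotProduct]
  have h1 : S.mulVec x ⬝ᵥ v = v ⬝ᵥ S.mulVec x := dotProduct_comm _ _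
  set b : ℝ := (Jmat k).mulVec g ⬝ᵥ ξ
  have hvv : v ⬝ᵥ S.mulVec v = -2 * b := by rw [hq1, hq3]; linarith [hq2]
  have hxv : x ⬝ᵥ S.mulVec v + ctilde ⬝ᵥ v = b := by
    rw [← hlin, h1, hsym']
  linarith [hvv, hxv, hsym']
end

section
/- Let f(x) = Hx + c and define the explicit exponential midpoint step x₊ = x + e^{hH}(x₋ − x) + 2hφ(hH)f(x). Then ½(x₊ + x) = e^{hH}·½(x + x₋) + hφ(hH)c; i.e., the averages ½(x₊+x) propagate by the exact flow of x' = Hx + c over time h. -/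
open Matrix

attribute [local instance] Matrix.linftyOpNormedRing Matrix.linftyOpNormedAlgebra

lemma phiM_mul (m : ℕ) (A : Matrix (Fin m) (Fin m) ℝ) : phiM A * A = expM A - 1 := by
  have hcont : Continuous fun s : ℝ => NormedSpace.exp (s • A) :=
    (NormedSpace.exp_continuous).comp (continuous_id.smul continuous_const)
  have hint := hcont.intervalIntegrable (μ := MeasureTheory.volume) 0 1
  have h1 : phiM A * A = ∫ s in (0:ℝ)..1, NormedSpace.exp (s • A) * A := by
    rw [phiM]
    exact (ContinuousLinearMap.intervalIntegral_comp_comm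
      ((ContinuousLinearMap.mul ℝ (Matrix (Fin m) (Fin m) ℝ)).flip A) hint).symm
  rw [h1]
  have h2 : (∫ s in (0:ℝ)..1, NormedSpace.exp (s • A) * A)
      = NormedSpace.exp ((1:ℝ) • A) - NormedSpace.exp ((0:ℝ) • A) := by
    exact intervalIntegral.integral_eq_sub_of_hasDerivAt
      (f := fun s : ℝ => NormedSpace.exp (s • A))
      (fun s _ => hasDerivAt_exp_smul_const A s)
      ((hcont.mul continuous_const).intervalIntegrable _ _)
  rw [h2, one_smul, zero_smul, NormedSpace.exp_zero, expM]

theorem stmt12 (m : ℕ) (H : Matrix (Fin m) (Fin m) ℝ) (c : Fin m → ℝ)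
    (f : (Fin m → ℝ) → (Fin m → ℝ)) (hf : ∀ x, f x = H.mulVec x + c)
    (h : ℝ) (x xm xp : Fin m → ℝ)
    (hxp : xp = x + (expM (h • H)).mulVec (xm - x) + (2 * h) • (phiM (h • H)).mulVec (f x)) :
    (1/2 : ℝ) • (xp + x)
      = (expM (h • H)).mulVec ((1/2 : ℝ) • (x + xm)) + h • (phiM (h • H)).mulVec c := by
  have key : (phiM (h • H)).mulVec ((h • H).mulVec x)
      = (expM (h • H)).mulVec x - x := by
    rw [mulVec_mulVec, phiM_mul, sub_mulVec, one_mulVec]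
  have hsm : h • (phiM (h • H)).mulVec (H.mulVec x)
      = (phiM (h • H)).mulVec ((h • H).mulVec x) := by
    rw [smul_mulVec, mulVec_smul]
  have key2 : h • (phiM (h • H)).mulVec (H.mulVec x) = (expM (h • H)).mulVec x - x :=
    hsm.trans key
  subst hxp
  rw [hf]
  simp only [mulVec_add, mulVec_smul, smul_add, mulVec_sub, smul_sub]
  linear_combination (norm := module) key2
end

section
/- Assume U ∈ ℝ^{2n×2k} has full rank with left inverse U† and x₋ − x ∈ Range(U). If x₊ = x + U e^{hF} U†(x₋ − x) + 2h U φ(hF) U† f(x), then x₋ = x + U e^{−hF} U†(x₊ − x) − 2h U φ(−hF) U† f(x); i.e., the approximate explicit exponential midpoint rule is time-symmetric. -/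
open Matrix

attribute [local instance] Matrix.linftyOpNormedRing Matrix.linftyOpNormedAlgebra

lemma exp_neg_mul_exp {m : Type*} [Fintype m] [DecidableEq m] (A : Matrix m m ℝ) :
    expM (-A) * expM A = 1 := by
  rw [expM, expM, ← Matrix.exp_add_of_commute _ _ (Commute.refl A).neg_left, neg_add_cancel,
    NormedSpace.exp_zero]

lemma exp_neg_mul_phi {m : Type*} [Fintype m] [DecidableEq m] (A : Matrix m m ℝ) :
    expM (-A) * phiM A = phiM (-A) := by
  have hcomm := ContinuousLinearMap.intervalIntegral_comp_comm
    (ContinuousLinearMap.mul ℝ (Matrix m m ℝ) (NormedSpace.exp (-A)))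
    (f := fun s : ℝ => NormedSpace.exp (s • A)) (a := 0) (b := 1) (μ := MeasureTheory.volume) ?hint
  case hint =>
    have hc : Continuous (fun s : ℝ => NormedSpace.exp (s • A)) :=
      (NormedSpace.exp_continuous.comp (continuous_id.smul continuous_const))
    exact hc.intervalIntegrable 0 1
  simp only [ContinuousLinearMap.mul_apply'] at hcomm
  rw [expM, phiM, ← hcomm]
  have key : ∀ s : ℝ, NormedSpace.exp (-A) * NormedSpace.exp (s • A)
      = NormedSpace.exp (-((1 - s) • A)) := by
    intro s
    rw [← Matrix.exp_add_of_commute _ _ (((Commute.refl A).smul_right s).neg_left)]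
    congr 1
    module
  simp_rw [key]
  have hs := intervalIntegral.integral_comp_sub_left
    (a := (0:ℝ)) (b := 1) (fun u : ℝ => NormedSpace.exp (-(u • A))) 1
  simp only [sub_zero, sub_self] at hs
  rw [hs, phiM]
  simp_rw [smul_neg]

theorem stmt14 (n k : ℕ)
    (U : Matrix (Fin n ⊕ Fin n) (Fin k ⊕ Fin k) ℝ)
    (Udag : Matrix (Fin k ⊕ Fin k) (Fin n ⊕ Fin n) ℝ) (hleft : Udag * U = 1)
    (F : Matrix (Fin k ⊕ Fin k) (Fin k ⊕ Fin k) ℝ)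
    (f : ((Fin n ⊕ Fin n) → ℝ) → ((Fin n ⊕ Fin n) → ℝ))
    (h : ℝ) (x xm xp : (Fin n ⊕ Fin n) → ℝ)
    (hrange : ∃ ζ, xm - x = U.mulVec ζ)
    (hxp : xp = x + U.mulVec ((expM (h • F)).mulVec (Udag.mulVec (xm - x)))
      + (2 * h) • U.mulVec ((phiM (h • F)).mulVec (Udag.mulVec (f x)))) :
    xm = x + U.mulVec ((expM ((-h) • F)).mulVec (Udag.mulVec (xp - x)))
      - (2 * h) • U.mulVec ((phiM ((-h) • F)).mulVec (Udag.mulVec (f x))) := by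
  obtain ⟨ζ, hζ⟩ := hrange
  set w : (Fin k ⊕ Fin k) → ℝ :=
    (expM (h • F)).mulVec (Udag.mulVec (xm - x))
      + (2 * h) • (phiM (h • F)).mulVec (Udag.mulVec (f x)) with hw
  have hxpw : xp - x = U.mulVec w := by
    rw [hxp, hw, Matrix.mulVec_add, Matrix.mulVec_smul]
    abel
  have hUdagxp : Udag.mulVec (xp - x) = w := by
    rw [hxpw, Matrix.mulVec_mulVec, hleft, Matrix.one_mulVec]
  have hnegsmul : (-h) • F = -(h • F) := by rw [neg_smul]
  have hζ' : Udag.mulVec (U.mulVec ζ) = ζ := by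
    rw [Matrix.mulVec_mulVec, hleft, Matrix.one_mulVec]
  have hUUxm : U.mulVec (Udag.mulVec (xm - x)) = xm - x := by
    rw [hζ, hζ']
  have hexpw : (expM ((-h) • F)).mulVec w
      = Udag.mulVec (xm - x) + (2 * h) • (phiM ((-h) • F)).mulVec (Udag.mulVec (f x)) := by
    have h1 : ∀ v, (expM (-(h • F))).mulVec ((expM (h • F)).mulVec v) = v := by
      intro v; rw [Matrix.mulVec_mulVec, exp_neg_mul_exp, Matrix.one_mulVec]
    have h2 : ∀ v, (expM (-(h • F))).mulVec ((phiM (h • F)).mulVec v)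
        = (phiM (-(h • F))).mulVec v := by
      intro v; rw [Matrix.mulVec_mulVec, exp_neg_mul_phi]
    rw [hnegsmul, hw, Matrix.mulVec_add, Matrix.mulVec_smul, h1, h2, ← hnegsmul]
  rw [hUdagxp, hexpw, Matrix.mulVec_add, Matrix.mulVec_smul, hUUxm]
  abel
end
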